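/- arXiv:1207.0201 — 4 statements merged into one kernel-verified Lean document; each statement's English description precedes it below -/
import Mathlib

section
/- Let n ≥ 1, s ≥ 0, q ∈ [2,∞), and A, B > 0. Let K, Φ : ℝ^n × ℝ^n → ℂ be measurable and suppose that for every t ∈ [0, s+n] one has sup_{x ∈ ℝ^n} ∫_{ℝ^n} |K(x,y)|² (1+|x−y|)^{2t} dy ≤ A² and sup_{z ∈ ℝ^n} ∫_{ℝ^n} |Φ(y,z)|² (1+|y−z|)^{2t} dy ≤ B². Define H(x,z) = ∫_{ℝ^n} K(x,y) Φ(y,z) dy. Then there is a constant C depending only on n such that sup_{x ∈ ℝ^n} ∫_{ℝ^n} |H(x,z)|^q (1+|x−z|)^{sq} dz ≤ C (A B)^q. -/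
open MeasureTheory ENNReal

/-- Weighted `L^q` bound for a composed kernel: if `K` and `Φ` satisfy the
weighted `L²` bounds `sup_x ∫ |K(x,y)|²(1+|x−y|)^{2t} dy ≤ A²` and
`sup_z ∫ |Φ(y,z)|²(1+|y−z|)^{2t} dy ≤ B²` for all `t ∈ [0, s+n]`, then the composed kernel
`H(x,z) = ∫ K(x,y)Φ(y,z) dy` satisfies
`sup_x ∫ |H(x,z)|^q (1+|x−z|)^{sq} dz ≤ C (AB)^q` for every `q ≥ 2`, with `C = C(n)`. -/
theorem stmt1 (n : ℕ) (hn : 1 ≤ n) :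
    ∃ C : ℝ, 0 < C ∧
      ∀ (s : ℝ), 0 ≤ s → ∀ (q : ℝ), 2 ≤ q → ∀ (A B : ℝ), 0 < A → 0 < B →
        ∀ (K Φ : EuclideanSpace ℝ (Fin n) × EuclideanSpace ℝ (Fin n) → ℂ),
          Measurable K → Measurable Φ →
          (∀ t : ℝ, 0 ≤ t → t ≤ s + n → ∀ x,
            ∫⁻ y, (‖K (x, y)‖₊ : ℝ≥0∞) ^ 2 * ENNReal.ofReal ((1 + ‖x - y‖) ^ (2 * t)) ≤
              ENNReal.ofReal (A ^ 2)) →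
          (∀ t : ℝ, 0 ≤ t → t ≤ s + n → ∀ z,
            ∫⁻ y, (‖Φ (y, z)‖₊ : ℝ≥0∞) ^ 2 * ENNReal.ofReal ((1 + ‖y - z‖) ^ (2 * t)) ≤
              ENNReal.ofReal (B ^ 2)) →
          ∀ x, ∫⁻ z, (‖∫ y, K (x, y) * Φ (y, z)‖₊ : ℝ≥0∞) ^ q *
                ENNReal.ofReal ((1 + ‖x - z‖) ^ (s * q)) ≤
              ENNReal.ofReal (C * (A * B) ^ q) := by
  classical
  set E := EuclideanSpace ℝ (Fin n)
  set C₀ : ℝ := ∫ u : E, (1 + ‖u‖) ^ (-(2 * (n:ℝ))) with hC₀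
  have hint : Integrable (fun u : E => (1 + ‖u‖) ^ (-(2 * (n:ℝ)))) := by
    apply integrable_one_add_norm
    rw [finrank_euclideanSpace_fin]
    have : (1:ℝ) ≤ n := by exact_mod_cast hn
    nlinarith
  have hC₀nonneg : 0 ≤ C₀ := by
    apply integral_nonneg
    intro u
    positivity
  refine ⟨C₀ + 1, by linarith, ?_⟩
  intro s hs q hq A B hA hB K Φ hKm hΦm hK hΦ x
  set t : ℝ := s + n with ht
  have ht0 : 0 ≤ t := by positivity
  have htt : t ≤ s + n := le_refl _
  -- Pointwise bound on the composed kernel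
  have key : ∀ z, (‖∫ y, K (x, y) * Φ (y, z)‖₊ : ℝ≥0∞) *
      ENNReal.ofReal ((1 + ‖x - z‖) ^ t) ≤ ENNReal.ofReal (A * B) := by
    intro z
    set w : ℝ≥0∞ := ENNReal.ofReal ((1 + ‖x - z‖) ^ t) with hw
    have hwne : w ≠ ⊤ := ofReal_ne_top
    have h1 : (‖∫ y, K (x, y) * Φ (y, z)‖₊ : ℝ≥0∞) ≤
        ∫⁻ y, (‖K (x, y)‖₊ : ℝ≥0∞) * (‖Φ (y, z)‖₊ : ℝ≥0∞) := by
      refine le_trans (enorm_integral_le_lintegral_enorm _) ?_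
      refine le_of_eq (lintegral_congr fun y => ?_)
      simp [nnnorm_mul]
      rfl
    have hKy : Measurable fun y : E => K (x, y) := hKm.comp measurable_prodMk_left
    have hΦy : Measurable fun y : E => Φ (y, z) := hΦm.comp (measurable_id.prodMk measurable_const)
    set F : E → ℝ≥0∞ := fun y => (‖K (x, y)‖₊ : ℝ≥0∞) * ENNReal.ofReal ((1 + ‖x - y‖) ^ t) with hF
    set G : E → ℝ≥0∞ := fun y => (‖Φ (y, z)‖₊ : ℝ≥0∞) * ENNReal.ofReal ((1 + ‖y - z‖) ^ t) with hG
    have hFm : Measurable F := by fun_prop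
    have hGm : Measurable G := by fun_prop
    have peetre : ∀ y : E, ((‖K (x, y)‖₊ : ℝ≥0∞) * (‖Φ (y, z)‖₊ : ℝ≥0∞)) * w ≤ F y * G y := by
      intro y
      have hreal : (1 + ‖x - z‖) ^ t ≤ (1 + ‖x - y‖) ^ t * (1 + ‖y - z‖) ^ t := by
        rw [← Real.mul_rpow (by positivity) (by positivity)]
        apply Real.rpow_le_rpow (by positivity) ?_ ht0
        have htri : ‖x - z‖ ≤ ‖x - y‖ + ‖y - z‖ := by
          simpa [sub_add_sub_cancel] using norm_add_le (x - y) (y - z)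
        nlinarith [norm_nonneg (x - y), norm_nonneg (y - z)]
      have hwle : w ≤ ENNReal.ofReal ((1 + ‖x - y‖) ^ t) * ENNReal.ofReal ((1 + ‖y - z‖) ^ t) := by
        rw [← ENNReal.ofReal_mul (by positivity)]
        exact ENNReal.ofReal_le_ofReal hreal
      calc ((‖K (x, y)‖₊ : ℝ≥0∞) * (‖Φ (y, z)‖₊ : ℝ≥0∞)) * w
          ≤ ((‖K (x, y)‖₊ : ℝ≥0∞) * (‖Φ (y, z)‖₊ : ℝ≥0∞)) *
            (ENNReal.ofReal ((1 + ‖x - y‖) ^ t) * ENNReal.ofReal ((1 + ‖y - z‖) ^ t)) :=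
            by gcongr
        _ = F y * G y := by rw [hF, hG]; ring
    have holder : (∫⁻ y, F y * G y) ≤
        (∫⁻ y, F y ^ (2:ℝ)) ^ (1/2:ℝ) * (∫⁻ y, G y ^ (2:ℝ)) ^ (1/2:ℝ) :=
      ENNReal.lintegral_mul_le_Lp_mul_Lq volume Real.HolderConjugate.two_two
        hFm.aemeasurable hGm.aemeasurable
    have hFsq : ∀ y : E, F y ^ (2:ℝ) =
        (‖K (x, y)‖₊ : ℝ≥0∞) ^ 2 * ENNReal.ofReal ((1 + ‖x - y‖) ^ (2 * t)) := by
      intro y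
      rw [hF]
      rw [ENNReal.mul_rpow_of_nonneg _ _ (by norm_num : (0:ℝ) ≤ 2)]
      congr 1
      · rw [show (2:ℝ) = ((2:ℕ):ℝ) by norm_num, ENNReal.rpow_natCast]
      · rw [ENNReal.ofReal_rpow_of_pos (by positivity)]
        congr 1
        rw [← Real.rpow_mul (by positivity : (0:ℝ) ≤ 1 + ‖x - y‖), mul_comm t 2]
    have hGsq : ∀ y : E, G y ^ (2:ℝ) =
        (‖Φ (y, z)‖₊ : ℝ≥0∞) ^ 2 * ENNReal.ofReal ((1 + ‖y - z‖) ^ (2 * t)) := by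
      intro y
      rw [hG]
      rw [ENNReal.mul_rpow_of_nonneg _ _ (by norm_num : (0:ℝ) ≤ 2)]
      congr 1
      · rw [show (2:ℝ) = ((2:ℕ):ℝ) by norm_num, ENNReal.rpow_natCast]
      · rw [ENNReal.ofReal_rpow_of_pos (by positivity)]
        congr 1
        rw [← Real.rpow_mul (by positivity : (0:ℝ) ≤ 1 + ‖y - z‖), mul_comm t 2]
    have hsqrtA : (ENNReal.ofReal (A ^ 2)) ^ (1/2:ℝ) = ENNReal.ofReal A := by
      have hA2 : (A:ℝ) ^ 2 = A ^ (2:ℝ) := by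
        rw [← Real.rpow_natCast A 2]; norm_num
      rw [hA2, ← ENNReal.ofReal_rpow_of_pos hA, ← ENNReal.rpow_mul,
        show (2:ℝ) * (1/2) = 1 by norm_num, ENNReal.rpow_one]
    have hsqrtB : (ENNReal.ofReal (B ^ 2)) ^ (1/2:ℝ) = ENNReal.ofReal B := by
      have hB2 : (B:ℝ) ^ 2 = B ^ (2:ℝ) := by
        rw [← Real.rpow_natCast B 2]; norm_num
      rw [hB2, ← ENNReal.ofReal_rpow_of_pos hB, ← ENNReal.rpow_mul,
        show (2:ℝ) * (1/2) = 1 by norm_num, ENNReal.rpow_one]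
    calc (‖∫ y, K (x, y) * Φ (y, z)‖₊ : ℝ≥0∞) * w
        ≤ (∫⁻ y, (‖K (x, y)‖₊ : ℝ≥0∞) * (‖Φ (y, z)‖₊ : ℝ≥0∞)) * w := by gcongr
      _ = ∫⁻ y, ((‖K (x, y)‖₊ : ℝ≥0∞) * (‖Φ (y, z)‖₊ : ℝ≥0∞)) * w :=
          (lintegral_mul_const' w _ hwne).symm
      _ ≤ ∫⁻ y, F y * G y := lintegral_mono peetre
      _ ≤ (∫⁻ y, F y ^ (2:ℝ)) ^ (1/2:ℝ) * (∫⁻ y, G y ^ (2:ℝ)) ^ (1/2:ℝ) := holder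
      _ ≤ (ENNReal.ofReal (A ^ 2)) ^ (1/2:ℝ) * (ENNReal.ofReal (B ^ 2)) ^ (1/2:ℝ) := by
          gcongr
          · rw [lintegral_congr hFsq]; exact hK t ht0 htt x
          · rw [lintegral_congr hGsq]; exact hΦ t ht0 htt z
      _ = ENNReal.ofReal (A * B) := by
          rw [hsqrtA, hsqrtB, ← ENNReal.ofReal_mul hA.le]
  have hq0 : (0:ℝ) ≤ q := by linarith
  -- pointwise in z
  have ptz : ∀ z, (‖∫ y, K (x, y) * Φ (y, z)‖₊ : ℝ≥0∞) ^ q *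
      ENNReal.ofReal ((1 + ‖x - z‖) ^ (s * q)) ≤
      ENNReal.ofReal ((A * B) ^ q) * ENNReal.ofReal ((1 + ‖x - z‖) ^ (-(2 * (n:ℝ)))) := by
    intro z
    set a : ℝ := 1 + ‖x - z‖ with ha
    have ha1 : 1 ≤ a := by rw [ha]; nlinarith [norm_nonneg (x - z)]
    have ha0 : 0 < a := by linarith
    set e : ℝ≥0∞ := (‖∫ y, K (x, y) * Φ (y, z)‖₊ : ℝ≥0∞) with he
    have h2 : (e * ENNReal.ofReal (a ^ t)) ^ q ≤ ENNReal.ofReal ((A * B) ^ q) := by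
      rw [show ENNReal.ofReal ((A * B) ^ q) = ENNReal.ofReal (A * B) ^ q from
        (ENNReal.ofReal_rpow_of_pos (mul_pos hA hB)).symm]
      exact ENNReal.rpow_le_rpow (key z) hq0
    have h3 : (e * ENNReal.ofReal (a ^ t)) ^ q = e ^ q * ENNReal.ofReal (a ^ (t * q)) := by
      rw [ENNReal.mul_rpow_of_nonneg _ _ hq0,
        ENNReal.ofReal_rpow_of_pos (Real.rpow_pos_of_pos ha0 t), ← Real.rpow_mul ha0.le]
    have hsplit : ENNReal.ofReal (a ^ (s * q)) =
        ENNReal.ofReal (a ^ (t * q)) * ENNReal.ofReal (a ^ (-((n:ℝ) * q))) := by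
      rw [← ENNReal.ofReal_mul (by positivity), ← Real.rpow_add ha0]
      congr 1
      rw [ht]; ring
    have hexp : ENNReal.ofReal (a ^ (-((n:ℝ) * q))) ≤ ENNReal.ofReal (a ^ (-(2 * (n:ℝ)))) := by
      apply ENNReal.ofReal_le_ofReal
      apply Real.rpow_le_rpow_of_exponent_le ha1
      have : (0:ℝ) ≤ n := by positivity
      nlinarith
    calc e ^ q * ENNReal.ofReal (a ^ (s * q))
        = (e ^ q * ENNReal.ofReal (a ^ (t * q))) * ENNReal.ofReal (a ^ (-((n:ℝ) * q))) := by
          rw [hsplit]; ring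
      _ = (e * ENNReal.ofReal (a ^ t)) ^ q * ENNReal.ofReal (a ^ (-((n:ℝ) * q))) := by rw [h3]
      _ ≤ ENNReal.ofReal ((A * B) ^ q) * ENNReal.ofReal (a ^ (-(2 * (n:ℝ)))) :=
          mul_le_mul' h2 hexp
  calc ∫⁻ z, (‖∫ y, K (x, y) * Φ (y, z)‖₊ : ℝ≥0∞) ^ q *
        ENNReal.ofReal ((1 + ‖x - z‖) ^ (s * q))
      ≤ ∫⁻ z, ENNReal.ofReal ((A * B) ^ q) *
          ENNReal.ofReal ((1 + ‖x - z‖) ^ (-(2 * (n:ℝ)))) := lintegral_mono ptz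
    _ = ENNReal.ofReal ((A * B) ^ q) *
        ∫⁻ z, ENNReal.ofReal ((1 + ‖x - z‖) ^ (-(2 * (n:ℝ)))) :=
        lintegral_const_mul' _ _ ofReal_ne_top
    _ = ENNReal.ofReal ((A * B) ^ q) * ENNReal.ofReal C₀ := by
        congr 1
        have hrev : ∀ z : E, ‖x - z‖ = ‖z - x‖ := fun z => norm_sub_rev x z
        calc ∫⁻ z, ENNReal.ofReal ((1 + ‖x - z‖) ^ (-(2 * (n:ℝ))))
            = ∫⁻ z, ENNReal.ofReal ((1 + ‖z - x‖) ^ (-(2 * (n:ℝ)))) := by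
              refine lintegral_congr fun z => by rw [hrev]
          _ = ∫⁻ u : E, ENNReal.ofReal ((1 + ‖u‖) ^ (-(2 * (n:ℝ)))) :=
              lintegral_sub_right_eq_self (fun u => ENNReal.ofReal ((1 + ‖u‖) ^ (-(2 * (n:ℝ))))) x
          _ = ENNReal.ofReal C₀ := by
              rw [hC₀, ← ofReal_integral_eq_lintegral_ofReal hint]
              exact Filter.Eventually.of_forall fun u => by positivity
    _ ≤ ENNReal.ofReal ((C₀ + 1) * (A * B) ^ q) := by
        rw [← ENNReal.ofReal_mul (by positivity)]
        apply ENNReal.ofReal_le_ofReal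
        nlinarith [Real.rpow_nonneg (by positivity : (0:ℝ) ≤ A * B) q]
end

section
/- Let n ≥ 1, let r ∈ (1,2], let q = r/(r−1) be its conjugate exponent, and let s > n/r. Let H : ℝ^n × ℝ^n → ℂ be measurable with sup_{x ∈ ℝ^n} ∫_{ℝ^n} |H(x,y)|^q (1+|x−y|)^{sq} dy ≤ A^q for some A > 0. Then there is a constant C depending only on n, r, s such that for every j ∈ ℤ, every f ∈ L^r(ℝ^n), and every x ∈ ℝ^n with M(|f|^r)(x) < ∞, the function y ↦ 2^{jn} H(2^j x, 2^j y) f(y) is integrable and |∫_{ℝ^n} 2^{jn} H(2^j x, 2^j y) f(y) dy| ≤ C · A · (M(|f|^r)(x))^{1/r}. -/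
open MeasureTheory ENNReal

/-- The (uncentered-radius, centered) Hardy–Littlewood maximal function
`M g (x) = sup_{R>0} |B(x,R)|⁻¹ ∫_{B(x,R)} |g|`. -/
noncomputable def maximalFn (n : ℕ) (g : EuclideanSpace ℝ (Fin n) → ℝ)
    (x : EuclideanSpace ℝ (Fin n)) : ℝ≥0∞ :=
  ⨆ (R : ℝ) (_ : 0 < R),
    (volume (Metric.ball x R))⁻¹ * ∫⁻ y in Metric.ball x R, ENNReal.ofReal |g y|

private lemma lint_ball_le_max (n : ℕ) (g : EuclideanSpace ℝ (Fin n) → ℝ)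
    (x : EuclideanSpace ℝ (Fin n)) {R : ℝ} (hR : 0 < R) :
    ∫⁻ y in Metric.ball x R, ENNReal.ofReal |g y| ≤
      volume (Metric.ball x R) * maximalFn n g x := by
  have h0 : volume (Metric.ball x R) ≠ 0 := (Metric.measure_ball_pos volume x hR).ne'
  have htop : volume (Metric.ball x R) ≠ ⊤ := measure_ball_lt_top.ne
  have h1 : (volume (Metric.ball x R))⁻¹ * ∫⁻ y in Metric.ball x R, ENNReal.ofReal |g y| ≤
      maximalFn n g x :=
    le_iSup₂ (f := fun (R : ℝ) (_ : 0 < R) =>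
      (volume (Metric.ball x R))⁻¹ * ∫⁻ y in Metric.ball x R, ENNReal.ofReal |g y|) R hR
  calc ∫⁻ y in Metric.ball x R, ENNReal.ofReal |g y|
      = volume (Metric.ball x R) *
        ((volume (Metric.ball x R))⁻¹ * ∫⁻ y in Metric.ball x R, ENNReal.ofReal |g y|) := by
        rw [← mul_assoc, ENNReal.mul_inv_cancel h0 htop, one_mul]
    _ ≤ _ := mul_le_mul_right h1 _

/-- If `sup_x ∫ |H(x,y)|^q (1+|x−y|)^{sq} dy ≤ A^q` with `q = r/(r−1)`,
`r ∈ (1,2]`, `s > n/r`, then for all `j ∈ ℤ`, `f ∈ L^r`, and `x` with `M(|f|^r)(x) < ∞`,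
the function `y ↦ 2^{jn} H(2^j x, 2^j y) f(y)` is integrable and
`|∫ 2^{jn} H(2^j x, 2^j y) f(y) dy| ≤ C A (M(|f|^r)(x))^{1/r}` with `C = C(n,r,s)`. -/
theorem stmt3 (n : ℕ) (hn : 1 ≤ n) (r : ℝ) (hr1 : 1 < r) (hr2 : r ≤ 2)
    (q : ℝ) (hq : q = r / (r - 1)) (s : ℝ) (hs : (n : ℝ) / r < s) :
    ∃ C : ℝ, 0 < C ∧
      ∀ (H : EuclideanSpace ℝ (Fin n) × EuclideanSpace ℝ (Fin n) → ℂ),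
        Measurable H → ∀ A : ℝ, 0 < A →
        (∀ x, ∫⁻ y, (‖H (x, y)‖₊ : ℝ≥0∞) ^ q * ENNReal.ofReal ((1 + ‖x - y‖) ^ (s * q)) ≤
            ENNReal.ofReal (A ^ q)) →
        ∀ (j : ℤ) (f : EuclideanSpace ℝ (Fin n) → ℂ),
          MemLp f (ENNReal.ofReal r) volume →
          ∀ x, maximalFn n (fun y => ‖f y‖ ^ r) x < ⊤ →
            Integrable (fun y =>
                (2 : ℂ) ^ (j * (n : ℤ)) * H ((2 : ℝ) ^ j • x, (2 : ℝ) ^ j • y) * f y) ∧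
            ENNReal.ofReal
                ‖∫ y, (2 : ℂ) ^ (j * (n : ℤ)) * H ((2 : ℝ) ^ j • x, (2 : ℝ) ^ j • y) * f y‖ ≤
              ENNReal.ofReal (C * A) *
                (maximalFn n (fun y => ‖f y‖ ^ r) x) ^ (1 / r) := by
  classical
  haveI : Nonempty (Fin n) := ⟨⟨0, hn⟩⟩
  haveI : Nontrivial (EuclideanSpace ℝ (Fin n)) := inferInstance
  have hr0 : (0:ℝ) < r := lt_trans one_pos hr1
  have hrq : r.HolderConjugate q := (Real.holderConjugate_iff_eq_conjExponent hr1).mpr hq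
  have hqr : q.HolderConjugate r := hrq.symm
  have hq0 : (0:ℝ) < q := hqr.pos
  have hsum : 1/q + 1/r = 1 := by
    have := hqr.inv_add_inv_eq_one; rw [one_div, one_div]; exact this
  have hnt : (n : ℝ) < s * r := (div_lt_iff₀ hr0).1 hs
  have hs0 : (0:ℝ) < s := lt_of_le_of_lt (by positivity) hs
  set t : ℝ := s * r with htdef
  have ht0 : 0 < t := mul_pos hs0 hr0
  set ρ : ℝ := (2:ℝ) ^ ((n:ℝ) - t) with hρdef
  have hρ0 : 0 < ρ := Real.rpow_pos_of_pos two_pos _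
  have hρ1 : ρ < 1 := Real.rpow_lt_one_of_one_lt_of_neg one_lt_two (by linarith)
  set Vn : ℝ := (volume (Metric.ball (0 : EuclideanSpace ℝ (Fin n)) 1)).toReal with hVndef
  have hVn : 0 < Vn :=
    ENNReal.toReal_pos (Metric.measure_ball_pos volume _ one_pos).ne' measure_ball_lt_top.ne
  have hB1 : volume (Metric.ball (0 : EuclideanSpace ℝ (Fin n)) 1) = ENNReal.ofReal Vn :=
    (ENNReal.ofReal_toReal measure_ball_lt_top.ne).symm
  set Kt : ℝ := (2:ℝ) ^ t * (1 - ρ)⁻¹ with hKtdef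
  have hKt : 0 < Kt := mul_pos (Real.rpow_pos_of_pos two_pos t) (inv_pos.2 (by linarith))
  refine ⟨(Vn * Kt) ^ (1/r), by positivity, ?_⟩
  intro H hHm A hA hH j f hf x hMx
  set C : ℝ := (Vn * Kt) ^ (1/r) with hCdef
  have hC : 0 < C := by positivity
  set c : ℝ := (2:ℝ) ^ j with hcdef
  have hc : 0 < c := zpow_pos two_pos j
  have hcn : (0:ℝ) < c ^ n := pow_pos hc n
  set Mx : ℝ≥0∞ := maximalFn n (fun y => ‖f y‖ ^ r) x with hMxdef
  set K : EuclideanSpace ℝ (Fin n) → ℝ≥0∞ := fun y => (‖H (c • x, c • y)‖₊ : ℝ≥0∞) with hKdef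
  set F : EuclideanSpace ℝ (Fin n) → ℝ≥0∞ := fun y => (‖f y‖₊ : ℝ≥0∞) with hFdef
  set d : EuclideanSpace ℝ (Fin n) → ℝ := fun y => ‖c • x - c • y‖ with hddef
  set w : EuclideanSpace ℝ (Fin n) → ℝ≥0∞ :=
    fun y => ENNReal.ofReal ((1 + d y) ^ s) with hwdef
  have hd0 : ∀ y, 0 ≤ d y := fun y => norm_nonneg _
  have hdb : ∀ y, (0:ℝ) < 1 + d y := fun y => by have := hd0 y; linarith
  have hdeq : ∀ y, d y = c * dist y x := by
    intro y
    rw [hddef]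
    simp only [← smul_sub, norm_smul, Real.norm_eq_abs, abs_of_pos hc, dist_eq_norm,
      norm_sub_rev]
  have hw0 : ∀ y, w y ≠ 0 :=
    fun y => (ENNReal.ofReal_pos.mpr (Real.rpow_pos_of_pos (hdb y) s)).ne'
  have hwt : ∀ y, w y ≠ ⊤ := fun y => ENNReal.ofReal_ne_top
  have hsm : Measurable fun y : EuclideanSpace ℝ (Fin n) => c • y := measurable_const_smul c
  have hKm : Measurable K := (hHm.comp (measurable_const.prodMk hsm)).nnnorm.coe_nnreal_ennreal
  have hdm : Measurable d := (measurable_const.sub hsm).norm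
  have hwm : Measurable w := ((measurable_const.add hdm).pow measurable_const).ennreal_ofReal
  have hFm : AEMeasurable F volume := hf.1.enorm
  -- Hölder
  have hHold : ∫⁻ y, K y * F y ≤
      (∫⁻ y, (K y * w y) ^ q) ^ (1/q) * (∫⁻ y, (F y * (w y)⁻¹) ^ r) ^ (1/r) := by
    have h := ENNReal.lintegral_mul_le_Lp_mul_Lq volume hqr
      ((hKm.mul hwm).aemeasurable) (hFm.mul hwm.inv.aemeasurable)
    calc ∫⁻ y, K y * F y
        = ∫⁻ y, ((fun y => K y * w y) * fun y => F y * (w y)⁻¹) y := by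
          refine lintegral_congr fun y => ?_
          simp only [Pi.mul_apply]
          rw [mul_mul_mul_comm, ENNReal.mul_inv_cancel (hw0 y) (hwt y), mul_one]
      _ ≤ _ := h
  -- Step B: kernel factor
  have hBq : ∫⁻ y, (K y * w y) ^ q ≤ ENNReal.ofReal ((c ^ n)⁻¹) * ENNReal.ofReal (A ^ q) := by
    set G : EuclideanSpace ℝ (Fin n) → ℝ≥0∞ := fun z =>
      (‖H (c • x, z)‖₊ : ℝ≥0∞) ^ q * ENNReal.ofReal ((1 + ‖c • x - z‖) ^ (s * q)) with hGdef
    have hGm : Measurable G :=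
      ((hHm.comp (measurable_const.prodMk measurable_id)).nnnorm.coe_nnreal_ennreal.pow
        measurable_const).mul
        (((measurable_const.add (measurable_const.sub measurable_id).norm).pow
          measurable_const).ennreal_ofReal)
    have hpt : ∀ y, (K y * w y) ^ q = G (c • y) := by
      intro y
      rw [ENNReal.mul_rpow_of_nonneg _ _ hq0.le]
      congr 1
      calc (w y) ^ q = ENNReal.ofReal (((1 + d y) ^ s) ^ q) :=
            ENNReal.ofReal_rpow_of_nonneg (Real.rpow_nonneg (hdb y).le s) hq0.le
        _ = ENNReal.ofReal ((1 + d y) ^ (s * q)) := by rw [← Real.rpow_mul (hdb y).le]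
    calc ∫⁻ y, (K y * w y) ^ q = ∫⁻ y, G (c • y) := lintegral_congr hpt
      _ = ∫⁻ z, G z ∂(Measure.map (fun y => c • y) volume) :=
          (lintegral_map hGm hsm).symm
      _ = ENNReal.ofReal |(c ^ Module.finrank ℝ (EuclideanSpace ℝ (Fin n)))⁻¹| * ∫⁻ z, G z := by
          rw [MeasureTheory.Measure.map_addHaar_smul volume hc.ne', lintegral_smul_measure, smul_eq_mul]
      _ ≤ ENNReal.ofReal ((c ^ n)⁻¹) * ENNReal.ofReal (A ^ q) := by
          rw [show |(c ^ Module.finrank ℝ (EuclideanSpace ℝ (Fin n)))⁻¹| = (c ^ n)⁻¹ by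
            rw [finrank_euclideanSpace_fin, abs_inv, abs_of_pos (pow_pos hc n)]]
          exact mul_le_mul_right (hH (c • x)) _
  -- Step C: maximal-function factor
  have hCr : ∫⁻ y, (F y * (w y)⁻¹) ^ r ≤
      ENNReal.ofReal ((c ^ n)⁻¹ * (Vn * Kt)) * Mx := by
    have hptC : ∀ y, (F y * (w y)⁻¹) ^ r = F y ^ r * ENNReal.ofReal ((1 + d y) ^ (-t)) := by
      intro y
      rw [ENNReal.mul_rpow_of_nonneg _ _ hr0.le]
      congr 1
      have h1 : (w y)⁻¹ = ENNReal.ofReal ((1 + d y) ^ (-s)) := by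
        rw [hwdef]
        rw [← ENNReal.ofReal_inv_of_pos (Real.rpow_pos_of_pos (hdb y) s),
          ← Real.rpow_neg (hdb y).le]
      rw [h1, ENNReal.ofReal_rpow_of_nonneg (Real.rpow_nonneg (hdb y).le _) hr0.le,
        ← Real.rpow_mul (hdb y).le]
      congr 1
      rw [htdef]; ring
    have hgeo : ∀ y, ENNReal.ofReal ((1 + d y) ^ (-t)) ≤
        ∑' l : ℕ, (Metric.ball x ((2:ℝ) ^ l / c)).indicator
          (fun _ => ENNReal.ofReal ((2:ℝ) ^ t * ((2:ℝ) ^ (-t)) ^ l)) y := by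
      intro y
      have hex : ∃ l : ℕ, d y < 2 ^ l := pow_unbounded_of_one_lt (d y) one_lt_two
      set l₀ := Nat.find hex with hl₀def
      have hl₀ : d y < 2 ^ l₀ := Nat.find_spec hex
      have hmem : y ∈ Metric.ball x ((2:ℝ) ^ l₀ / c) := by
        rw [Metric.mem_ball, lt_div_iff₀ hc, mul_comm, ← hdeq y]
        exact hl₀
      have hlow : (2:ℝ) ^ ((l₀:ℝ) - 1) ≤ 1 + d y := by
        rcases Nat.eq_zero_or_pos l₀ with h0 | hpos
        · rw [h0]
          have h2 : (2:ℝ) ^ (((0:ℕ):ℝ) - 1) = 2⁻¹ := by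
            rw [show (((0:ℕ):ℝ) - 1) = (-1 : ℝ) by norm_num, Real.rpow_neg_one]
          rw [h2]
          have := hd0 y; linarith
        · obtain ⟨m, hm'⟩ : ∃ m, l₀ = m + 1 := ⟨l₀ - 1, (Nat.succ_pred_eq_of_pos hpos).symm⟩
          have hm : ¬ d y < 2 ^ m := Nat.find_min hex (by omega)
          push_neg at hm
          have e : (2:ℝ) ^ ((l₀:ℝ) - 1) = (2:ℝ) ^ m := by
            rw [hm', ← Real.rpow_natCast 2 m]
            congr 1
            push_cast
            ring
          rw [e]
          have := hm; linarith
      have hup : (1 + d y) ^ (-t) ≤ (2:ℝ) ^ t * ((2:ℝ) ^ (-t)) ^ l₀ := by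
        have h1 : (1 + d y) ^ (-t) ≤ ((2:ℝ) ^ ((l₀:ℝ) - 1)) ^ (-t) :=
          Real.rpow_le_rpow_of_nonpos (Real.rpow_pos_of_pos two_pos _) hlow (by linarith)
        have h2 : ((2:ℝ) ^ ((l₀:ℝ) - 1)) ^ (-t) = (2:ℝ) ^ t * ((2:ℝ) ^ (-t)) ^ l₀ := by
          rw [← Real.rpow_mul (by norm_num : (0:ℝ) ≤ 2) ((l₀:ℝ) - 1) (-t),
            ← Real.rpow_natCast ((2:ℝ) ^ (-t)) l₀,
            ← Real.rpow_mul (by norm_num : (0:ℝ) ≤ 2) (-t) (l₀:ℝ),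
            ← Real.rpow_add (by norm_num : (0:ℝ) < 2) t ((-t) * (l₀:ℝ))]
          congr 1
          ring
        rw [← h2]
        exact h1
      refine le_trans ?_ (ENNReal.le_tsum l₀)
      rw [Set.indicator_of_mem hmem]
      exact ENNReal.ofReal_le_ofReal hup
    have key : ∀ y, (F y * (w y)⁻¹) ^ r ≤
        ∑' l : ℕ, (Metric.ball x ((2:ℝ) ^ l / c)).indicator
          (fun _ => ENNReal.ofReal ((2:ℝ) ^ t * ((2:ℝ) ^ (-t)) ^ l)) y * F y ^ r := by
      intro y
      rw [hptC y, mul_comm, ENNReal.tsum_mul_right]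
      exact mul_le_mul_left (hgeo y) _
    have hterm : ∀ l : ℕ,
        ∫⁻ y, (Metric.ball x ((2:ℝ) ^ l / c)).indicator
          (fun _ => ENNReal.ofReal ((2:ℝ) ^ t * ((2:ℝ) ^ (-t)) ^ l)) y * F y ^ r ≤
        ENNReal.ofReal (((c ^ n)⁻¹ * Vn * (2:ℝ) ^ t) * ρ ^ l) * Mx := by
      intro l
      have hrad : (0:ℝ) < (2:ℝ) ^ l / c := by positivity
      have hF2 : ∀ y, F y ^ r = ENNReal.ofReal |‖f y‖ ^ r| := by
        intro y
        rw [abs_of_nonneg (Real.rpow_nonneg (norm_nonneg _) r),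
          ← ENNReal.ofReal_rpow_of_nonneg (norm_nonneg _) hr0.le, ofReal_norm, enorm_eq_nnnorm]
      have e0 : ∀ y, (Metric.ball x ((2:ℝ) ^ l / c)).indicator
          (fun _ => ENNReal.ofReal ((2:ℝ) ^ t * ((2:ℝ) ^ (-t)) ^ l)) y * F y ^ r =
          (Metric.ball x ((2:ℝ) ^ l / c)).indicator
            (fun y => ENNReal.ofReal ((2:ℝ) ^ t * ((2:ℝ) ^ (-t)) ^ l) * F y ^ r) y := by
        intro y
        by_cases h : y ∈ Metric.ball x ((2:ℝ) ^ l / c) <;>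
          simp [Set.indicator_apply, h]
      calc ∫⁻ y, (Metric.ball x ((2:ℝ) ^ l / c)).indicator
              (fun _ => ENNReal.ofReal ((2:ℝ) ^ t * ((2:ℝ) ^ (-t)) ^ l)) y * F y ^ r
          = ∫⁻ y in Metric.ball x ((2:ℝ) ^ l / c),
              ENNReal.ofReal ((2:ℝ) ^ t * ((2:ℝ) ^ (-t)) ^ l) * F y ^ r := by
            rw [← lintegral_indicator measurableSet_ball]
            exact lintegral_congr e0
        _ = ENNReal.ofReal ((2:ℝ) ^ t * ((2:ℝ) ^ (-t)) ^ l) *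
              ∫⁻ y in Metric.ball x ((2:ℝ) ^ l / c), F y ^ r :=
            lintegral_const_mul' _ _ ENNReal.ofReal_ne_top
        _ ≤ ENNReal.ofReal ((2:ℝ) ^ t * ((2:ℝ) ^ (-t)) ^ l) *
              (volume (Metric.ball x ((2:ℝ) ^ l / c)) * Mx) := by
            refine mul_le_mul_right ?_ _
            have : ∫⁻ y in Metric.ball x ((2:ℝ) ^ l / c), F y ^ r =
                ∫⁻ y in Metric.ball x ((2:ℝ) ^ l / c), ENNReal.ofReal |‖f y‖ ^ r| :=
              lintegral_congr fun y => hF2 y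
            rw [this, hMxdef]
            exact lint_ball_le_max n (fun y => ‖f y‖ ^ r) x hrad
        _ = ENNReal.ofReal ((2:ℝ) ^ t * ((2:ℝ) ^ (-t)) ^ l) *
              (ENNReal.ofReal (((2:ℝ) ^ l / c) ^ n * Vn) * Mx) := by
            rw [MeasureTheory.Measure.addHaar_ball volume x hrad.le, hB1,
              finrank_euclideanSpace_fin, ← ENNReal.ofReal_mul (by positivity)]
        _ = ENNReal.ofReal (((2:ℝ) ^ t * ((2:ℝ) ^ (-t)) ^ l) * (((2:ℝ) ^ l / c) ^ n * Vn)) *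
              Mx := by
            rw [← mul_assoc, ← ENNReal.ofReal_mul (by positivity)]
        _ = ENNReal.ofReal (((c ^ n)⁻¹ * Vn * (2:ℝ) ^ t) * ρ ^ l) * Mx := by
            congr 2
            have e1 : ((2:ℝ) ^ (-t)) ^ l = (2:ℝ) ^ ((-t) * (l:ℝ)) := by
              rw [← Real.rpow_natCast ((2:ℝ) ^ (-t)) l,
                ← Real.rpow_mul (by norm_num : (0:ℝ) ≤ 2)]
            have e2 : ((2:ℝ) ^ l / c) ^ n = (2:ℝ) ^ ((l:ℝ) * (n:ℝ)) / c ^ n := by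
              rw [div_pow]
              congr 1
              rw [← pow_mul, ← Real.rpow_natCast 2 (l * n)]
              congr 1
              push_cast
              ring
            have e3 : ρ ^ l = (2:ℝ) ^ (((n:ℝ) - t) * (l:ℝ)) := by
              rw [hρdef, ← Real.rpow_natCast ((2:ℝ) ^ ((n:ℝ) - t)) l,
                ← Real.rpow_mul (by norm_num : (0:ℝ) ≤ 2)]
            have e4 : (2:ℝ) ^ t * ((2:ℝ) ^ ((-t) * (l:ℝ)) * (2:ℝ) ^ ((l:ℝ) * (n:ℝ))) =
                (2:ℝ) ^ t * (2:ℝ) ^ (((n:ℝ) - t) * (l:ℝ)) := by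
              rw [← Real.rpow_add (by norm_num : (0:ℝ) < 2)]
              congr 1
              ring
            rw [e1, e2, e3, div_eq_mul_inv]
            linear_combination ((c ^ n)⁻¹ * Vn) * e4
    calc ∫⁻ y, (F y * (w y)⁻¹) ^ r
        ≤ ∫⁻ y, ∑' l : ℕ, (Metric.ball x ((2:ℝ) ^ l / c)).indicator
            (fun _ => ENNReal.ofReal ((2:ℝ) ^ t * ((2:ℝ) ^ (-t)) ^ l)) y * F y ^ r :=
          lintegral_mono key
      _ = ∑' l : ℕ, ∫⁻ y, (Metric.ball x ((2:ℝ) ^ l / c)).indicator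
            (fun _ => ENNReal.ofReal ((2:ℝ) ^ t * ((2:ℝ) ^ (-t)) ^ l)) y * F y ^ r :=
          lintegral_tsum fun l =>
            ((measurable_const.indicator measurableSet_ball).aemeasurable.mul
              (hFm.pow aemeasurable_const))
      _ ≤ ∑' l : ℕ, ENNReal.ofReal (((c ^ n)⁻¹ * Vn * (2:ℝ) ^ t) * ρ ^ l) * Mx :=
          ENNReal.tsum_le_tsum hterm
      _ = (∑' l : ℕ, ENNReal.ofReal (((c ^ n)⁻¹ * Vn * (2:ℝ) ^ t) * ρ ^ l)) * Mx :=
          ENNReal.tsum_mul_right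
      _ = ENNReal.ofReal ((c ^ n)⁻¹ * (Vn * Kt)) * Mx := by
          congr 1
          rw [← ENNReal.ofReal_tsum_of_nonneg (fun l => by positivity)
            (Summable.mul_left _ (summable_geometric_of_lt_one hρ0.le hρ1))]
          rw [tsum_mul_left, tsum_geometric_of_lt_one hρ0.le hρ1]
          congr 1
          rw [hKtdef]
          ring
  -- the pointwise norm identity
  have hnorm : ∀ y, (‖(2 : ℂ) ^ (j * (n : ℤ)) * H (c • x, c • y) * f y‖₊ : ℝ≥0∞) =
      ENNReal.ofReal (c ^ n) * (K y * F y) := by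
    intro y
    rw [nnnorm_mul, nnnorm_mul, ENNReal.coe_mul, ENNReal.coe_mul, mul_assoc]
    congr 1
    rw [← enorm_eq_nnnorm, ← ofReal_norm, norm_zpow]
    congr 1
    have : ‖(2:ℂ)‖ = (2:ℝ) := by norm_num
    rw [this, hcdef, ← zpow_natCast ((2:ℝ) ^ j) n, ← zpow_mul]
  have hlin : ∫⁻ y, (‖(2 : ℂ) ^ (j * (n : ℤ)) * H (c • x, c • y) * f y‖₊ : ℝ≥0∞) =
      ENNReal.ofReal (c ^ n) * ∫⁻ y, K y * F y := by
    rw [← lintegral_const_mul' _ _ ENNReal.ofReal_ne_top]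
    exact lintegral_congr hnorm
  -- combine everything
  have hmain : ∫⁻ y, (‖(2 : ℂ) ^ (j * (n : ℤ)) * H (c • x, c • y) * f y‖₊ : ℝ≥0∞) ≤
      ENNReal.ofReal (C * A) * Mx ^ (1/r) := by
    have b1 : (∫⁻ y, (K y * w y) ^ q) ^ (1/q) ≤
        (ENNReal.ofReal ((c ^ n)⁻¹ * A ^ q)) ^ (1/q) := by
      refine ENNReal.rpow_le_rpow ?_ (by positivity)
      rw [ENNReal.ofReal_mul (by positivity)]
      exact hBq
    have b2 : (∫⁻ y, (F y * (w y)⁻¹) ^ r) ^ (1/r) ≤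
        (ENNReal.ofReal ((c ^ n)⁻¹ * (Vn * Kt)) * Mx) ^ (1/r) :=
      ENNReal.rpow_le_rpow hCr (by positivity)
    calc ∫⁻ y, (‖(2 : ℂ) ^ (j * (n : ℤ)) * H (c • x, c • y) * f y‖₊ : ℝ≥0∞)
        = ENNReal.ofReal (c ^ n) * ∫⁻ y, K y * F y := hlin
      _ ≤ ENNReal.ofReal (c ^ n) *
            ((ENNReal.ofReal ((c ^ n)⁻¹ * A ^ q)) ^ (1/q) *
              (ENNReal.ofReal ((c ^ n)⁻¹ * (Vn * Kt)) * Mx) ^ (1/r)) :=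
          mul_le_mul_right (le_trans hHold (mul_le_mul' b1 b2)) _
      _ = ENNReal.ofReal (c ^ n) *
            (ENNReal.ofReal (((c ^ n)⁻¹ * A ^ q) ^ (1/q)) *
              (ENNReal.ofReal (((c ^ n)⁻¹ * (Vn * Kt)) ^ (1/r)) * Mx ^ (1/r))) := by
          rw [ENNReal.mul_rpow_of_nonneg _ _ (by positivity : (0:ℝ) ≤ 1/r),
            ENNReal.ofReal_rpow_of_nonneg (by positivity) (by positivity : (0:ℝ) ≤ 1/q),
            ENNReal.ofReal_rpow_of_nonneg (by positivity) (by positivity : (0:ℝ) ≤ 1/r)]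
      _ = ENNReal.ofReal (c ^ n) * ENNReal.ofReal (((c ^ n)⁻¹ * A ^ q) ^ (1/q)) *
            ENNReal.ofReal (((c ^ n)⁻¹ * (Vn * Kt)) ^ (1/r)) * Mx ^ (1/r) := by
          ring
      _ = ENNReal.ofReal (c ^ n * (((c ^ n)⁻¹ * A ^ q) ^ (1/q) *
            (((c ^ n)⁻¹ * (Vn * Kt)) ^ (1/r)))) * Mx ^ (1/r) := by
          rw [← ENNReal.ofReal_mul (by positivity), ← ENNReal.ofReal_mul (by positivity)]
          ring_nf
      _ = ENNReal.ofReal (C * A) * Mx ^ (1/r) := by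
          congr 2
          have hAq : (A ^ q) ^ (1/q) = A := by
            rw [← Real.rpow_mul hA.le, mul_one_div_cancel hq0.ne', Real.rpow_one]
          rw [Real.mul_rpow (by positivity) (by positivity),
            Real.mul_rpow (by positivity) (by positivity), hAq]
          have h1 : ((c ^ n)⁻¹) ^ (1/q) = (c ^ n) ^ (-(1/q)) := by
            rw [Real.inv_rpow hcn.le, ← Real.rpow_neg hcn.le]
          have h2 : ((c ^ n)⁻¹) ^ (1/r) = (c ^ n) ^ (-(1/r)) := by
            rw [Real.inv_rpow hcn.le, ← Real.rpow_neg hcn.le]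
          have hone : c ^ n * ((c ^ n) ^ (-(1/q)) * (c ^ n) ^ (-(1/r))) = 1 := by
            rw [← Real.rpow_add hcn]
            have he : -(1/q) + -(1/r) = -1 := by linarith
            rw [he, Real.rpow_neg_one]
            exact mul_inv_cancel₀ hcn.ne'
          rw [h1, h2, hCdef]
          linear_combination ((Vn * Kt) ^ (1/r) * A) * hone
  have hgm : AEStronglyMeasurable
      (fun y => (2 : ℂ) ^ (j * (n : ℤ)) * H (c • x, c • y) * f y) volume :=
    ((measurable_const.mul (hHm.comp (measurable_const.prodMk hsm))).aestronglyMeasurable.mul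
      hf.1)
  have hfin : (∫⁻ y, (‖(2 : ℂ) ^ (j * (n : ℤ)) * H (c • x, c • y) * f y‖₊ : ℝ≥0∞)) < ⊤ :=
    lt_of_le_of_lt hmain
      (ENNReal.mul_lt_top ENNReal.ofReal_lt_top
        (ENNReal.rpow_lt_top_of_nonneg (by positivity) hMx.ne))
  refine ⟨⟨hgm, hfin⟩, ?_⟩
  calc ENNReal.ofReal ‖∫ y, (2 : ℂ) ^ (j * (n : ℤ)) * H (c • x, c • y) * f y‖
      = (‖∫ y, (2 : ℂ) ^ (j * (n : ℤ)) * H (c • x, c • y) * f y‖₊ : ℝ≥0∞) :=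
        ofReal_norm _
    _ ≤ ∫⁻ y, (‖(2 : ℂ) ^ (j * (n : ℤ)) * H (c • x, c • y) * f y‖₊ : ℝ≥0∞) :=
        enorm_integral_le_lintegral_enorm _
    _ ≤ ENNReal.ofReal (C * A) * Mx ^ (1/r) := hmain
end

section
/- Let τ : ℝ → ℂ be continuously differentiable with both τ and τ′ square integrable. Then ∑_{k ∈ ℤ} ( sup_{r ∈ [k,k+1]} |τ(r)|² ) ≤ ∫_ℝ |τ(r)|² dr + 2 (∫_ℝ |τ(r)|² dr)^{1/2} (∫_ℝ |τ′(r)|² dr)^{1/2}. -/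
open MeasureTheory ENNReal

/-- For `τ : ℝ → ℂ` continuously differentiable with `τ, τ′ ∈ L²`,
`∑_{k∈ℤ} sup_{r∈[k,k+1]} |τ(r)|² ≤ ∫|τ|² + 2 (∫|τ|²)^{1/2} (∫|τ′|²)^{1/2}`. -/
theorem stmt4 (τ : ℝ → ℂ) (hτ : ContDiff ℝ 1 τ)
    (h2 : Integrable (fun r => ‖τ r‖ ^ 2))
    (h2' : Integrable (fun r => ‖deriv τ r‖ ^ 2)) :
    (∑' k : ℤ, ⨆ r ∈ Set.Icc (k : ℝ) (k + 1), ENNReal.ofReal (‖τ r‖ ^ 2)) ≤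
      ENNReal.ofReal ((∫ r, ‖τ r‖ ^ 2) +
        2 * Real.sqrt (∫ r, ‖τ r‖ ^ 2) * Real.sqrt (∫ r, ‖deriv τ r‖ ^ 2)) := by
  have hτc : Continuous τ := hτ.continuous
  have hτ'c : Continuous (deriv τ) := hτ.continuous_deriv le_rfl
  -- notations
  set g : ℝ → ℝ := fun r => ‖τ r‖ ^ 2 with hg_def
  set d : ℝ → ℝ := fun r => 2 * (inner ℝ (τ r) (deriv τ r) : ℝ) with hd_def
  set b : ℝ → ℝ := fun r => 2 * (‖τ r‖ * ‖deriv τ r‖) with hb_def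
  set F : ℝ → ℝ := fun r => g r + b r with hF_def
  have hgc : Continuous g := (hτc.norm).pow 2
  have hdc : Continuous d := continuous_const.mul (hτc.inner hτ'c)
  have hbc : Continuous b := continuous_const.mul (hτc.norm.mul hτ'c.norm)
  have hFc : Continuous F := hgc.add hbc
  have hFnn : ∀ u, 0 ≤ F u := fun u => by
    have : (0:ℝ) ≤ g u := sq_nonneg _
    have : (0:ℝ) ≤ b u := by positivity
    simp only [hF_def]; positivity
  have hderiv : ∀ r : ℝ, HasDerivAt g (d r) r := fun r =>
    ((hτ.differentiable one_ne_zero r).hasDerivAt).norm_sq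
  have hdb : ∀ u, |d u| ≤ b u := fun u => by
    simp only [hd_def, hb_def, abs_mul, abs_two]
    have := abs_real_inner_le_norm (τ u) (deriv τ u)
    nlinarith
  -- key per-interval estimate
  have key : ∀ (k : ℤ), ∀ r ∈ Set.Icc (k:ℝ) (k+1),
      g r ≤ ∫ u in Set.Ico (k:ℝ) (k+1), F u := by
    intro k r hr
    have hk1 : (k:ℝ) ≤ (k:ℝ) + 1 := by linarith
    set D := ∫ u in (k:ℝ)..((k:ℝ)+1), |d u| with hD_def
    have habs : ∀ s ∈ Set.Icc (k:ℝ) ((k:ℝ)+1), g r - g s ≤ D := by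
      intro s hs
      have hftc : ∫ u in s..r, d u = g r - g s :=
        intervalIntegral.integral_eq_sub_of_hasDerivAt (fun u _ => hderiv u)
          (hdc.intervalIntegrable _ _)
      have h1 : g r - g s ≤ |∫ u in s..r, d u| := by
        rw [hftc]; exact le_abs_self _
      refine h1.trans ?_
      rcases le_total s r with hsr | hrs
      · calc |∫ u in s..r, d u| ≤ ∫ u in s..r, |d u| :=
              intervalIntegral.abs_integral_le_integral_abs hsr
          _ ≤ D := intervalIntegral.integral_mono_interval hs.1 hsr hr.2
              (ae_of_all _ fun u => abs_nonneg _) ((hdc.abs).intervalIntegrable _ _)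
      · rw [intervalIntegral.integral_symm, abs_neg]
        calc |∫ u in r..s, d u| ≤ ∫ u in r..s, |d u| :=
              intervalIntegral.abs_integral_le_integral_abs hrs
          _ ≤ D := intervalIntegral.integral_mono_interval hr.1 hrs hs.2
              (ae_of_all _ fun u => abs_nonneg _) ((hdc.abs).intervalIntegrable _ _)
    have h1 : g r - D ≤ ∫ s in (k:ℝ)..((k:ℝ)+1), g s := by
      have hmono := intervalIntegral.integral_mono_on (f := fun _ => g r - D) (g := g)
        hk1 (intervalIntegrable_const (μ := volume)) (hgc.intervalIntegrable _ _)
        (fun s hs => by have := habs s hs; show g r - D ≤ g s; linarith)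
      rw [intervalIntegral.integral_const] at hmono
      have e : ((k:ℝ) + 1) - k = 1 := by ring
      rwa [e, one_smul] at hmono
    have hD : D ≤ ∫ s in (k:ℝ)..((k:ℝ)+1), b s :=
      intervalIntegral.integral_mono_on hk1 ((hdc.abs).intervalIntegrable _ _)
        (hbc.intervalIntegrable _ _) (fun u _ => hdb u)
    have h2 : g r ≤ ∫ u in (k:ℝ)..((k:ℝ)+1), F u := by
      rw [hF_def]
      rw [intervalIntegral.integral_add (hgc.intervalIntegrable _ _)
        (hbc.intervalIntegrable _ _)]
      linarith
    rwa [intervalIntegral.integral_of_le hk1, integral_Ioc_eq_integral_Ioo,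
      ← integral_Ico_eq_integral_Ioo] at h2
  -- integrability of F on ℝ
  have hφm : MemLp (fun r => ‖τ r‖) 2 (volume : Measure ℝ) :=
    (memLp_two_iff_integrable_sq hτc.norm.aestronglyMeasurable).mpr h2
  have hψm : MemLp (fun r => ‖deriv τ r‖) 2 (volume : Measure ℝ) :=
    (memLp_two_iff_integrable_sq hτ'c.norm.aestronglyMeasurable).mpr h2'
  set f2 : (ℝ →₂[(volume : Measure ℝ)] ℝ) := hφm.toLp _ with hf2_def
  set g2 : (ℝ →₂[(volume : Measure ℝ)] ℝ) := hψm.toLp _ with hg2_def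
  have hmul : Integrable (fun r => ‖τ r‖ * ‖deriv τ r‖) := by
    refine (L2.integrable_inner (𝕜 := ℝ) f2 g2).congr ?_
    filter_upwards [hφm.coeFn_toLp, hψm.coeFn_toLp] with x hx hy
    simp [RCLike.inner_apply, hf2_def, hg2_def, hx, hy, mul_comm]
  have hbint : Integrable b := hmul.const_mul 2
  have hFint : Integrable F := h2.add hbint
  -- Cauchy-Schwarz
  have hCS : ∫ r, ‖τ r‖ * ‖deriv τ r‖ ≤
      Real.sqrt (∫ r, ‖τ r‖ ^ 2) * Real.sqrt (∫ r, ‖deriv τ r‖ ^ 2) := by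
    have hinner : (inner ℝ f2 g2 : ℝ) = ∫ r, ‖τ r‖ * ‖deriv τ r‖ := by
      rw [L2.inner_def]
      refine integral_congr_ae ?_
      filter_upwards [hφm.coeFn_toLp, hψm.coeFn_toLp] with x hx hy
      simp [RCLike.inner_apply, hf2_def, hg2_def, hx, hy, mul_comm]
    have hnf : ‖f2‖ = Real.sqrt (∫ r, ‖τ r‖ ^ 2) := by
      have hsq : ‖f2‖ ^ 2 = ∫ r, ‖τ r‖ ^ 2 := by
        rw [← real_inner_self_eq_norm_sq, L2.inner_def]
        refine integral_congr_ae ?_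
        filter_upwards [hφm.coeFn_toLp] with x hx
        simp [RCLike.inner_apply, hf2_def, hx, sq]
      rw [← hsq, Real.sqrt_sq (norm_nonneg _)]
    have hng : ‖g2‖ = Real.sqrt (∫ r, ‖deriv τ r‖ ^ 2) := by
      have hsq : ‖g2‖ ^ 2 = ∫ r, ‖deriv τ r‖ ^ 2 := by
        rw [← real_inner_self_eq_norm_sq, L2.inner_def]
        refine integral_congr_ae ?_
        filter_upwards [hψm.coeFn_toLp] with x hx
        simp [RCLike.inner_apply, hg2_def, hx, sq]
      rw [← hsq, Real.sqrt_sq (norm_nonneg _)]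
    calc ∫ r, ‖τ r‖ * ‖deriv τ r‖ = (inner ℝ f2 g2 : ℝ) := hinner.symm
      _ ≤ ‖f2‖ * ‖g2‖ := real_inner_le_norm f2 g2
      _ = _ := by rw [hnf, hng]
  -- assemble
  calc (∑' k : ℤ, ⨆ r ∈ Set.Icc (k : ℝ) (k + 1), ENNReal.ofReal (‖τ r‖ ^ 2))
      ≤ ∑' k : ℤ, ∫⁻ u in Set.Ico (k:ℝ) ((k:ℝ)+1), ENNReal.ofReal (F u) := by
        refine ENNReal.tsum_le_tsum fun k => ?_
        have heq : ENNReal.ofReal (∫ u in Set.Ico (k:ℝ) ((k:ℝ)+1), F u) =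
            ∫⁻ u in Set.Ico (k:ℝ) ((k:ℝ)+1), ENNReal.ofReal (F u) :=
          ofReal_integral_eq_lintegral_ofReal
            (hFint.integrableOn) (ae_of_all _ hFnn)
        refine iSup₂_le fun r hr => ?_
        rw [← heq]
        exact ENNReal.ofReal_le_ofReal (key k r hr)
    _ = ∫⁻ u, ENNReal.ofReal (F u) := by
        rw [← lintegral_iUnion (fun k : ℤ => measurableSet_Ico)
          (Set.pairwise_disjoint_Ico_intCast ℝ), iUnion_Ico_intCast,
          Measure.restrict_univ]
    _ = ENNReal.ofReal (∫ u, F u) :=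
        (ofReal_integral_eq_lintegral_ofReal hFint (ae_of_all _ hFnn)).symm
    _ ≤ _ := by
        refine ENNReal.ofReal_le_ofReal ?_
        rw [hF_def]
        rw [integral_add h2 hbint]
        have : ∫ r, b r = 2 * ∫ r, ‖τ r‖ * ‖deriv τ r‖ := by
          simp only [hb_def]; rw [integral_const_mul]
        rw [this]
        have hA : ∫ r, g r = ∫ r, ‖τ r‖ ^ 2 := rfl
        nlinarith [hCS]
end

section
/- Let (X, μ) be a measure space, p ∈ (0,∞), N a positive integer, and c, C₀, A, B > 0. Let u_1,…,u_N, s_1,…,s_N, v_1,…,v_N and g be nonnegative measurable functions on X satisfying: (i) for every 1 ≤ i ≤ N, every λ > 0 and every ε ∈ (0,1/2), μ({u_i > 2λ} ∩ {s_i ≤ ελ}) ≤ C₀ exp(−c/ε²) μ({v_i > λ}); (ii) s_i(x) ≤ A g(x) for all x and all i; (iii) ∫_X v_i^p dμ ≤ B^p for all i and ∫_X g^p dμ ≤ B^p. Then there exists a constant C depending only on p, c, C₀ and A (but not on N, μ, or the functions) such that ∫_X (max_{1 ≤ i ≤ N} u_i)^p dμ ≤ C^p (log(N+1))^{p/2}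 B^p. -/
open MeasureTheory ENNReal Set

set_option maxHeartbeats 1000000 in
/-- Abstract good-λ argument: a sub-Gaussian good-λ inequality for each pair
`(u_i, s_i)` relative to `v_i`, pointwise control `s_i ≤ A g`, and `L^p` bounds on the `v_i`
and on `g`, give the `L^p` bound `∫ (max_i u_i)^p ≤ C^p (log(N+1))^{p/2} B^p`, with `C`
depending only on `p, c, C₀, A`. -/
theorem stmt5 (p : ℝ) (hp : 0 < p) (c C₀ A : ℝ) (hc : 0 < c) (hC₀ : 0 < C₀) (hA : 0 < A) :
    ∃ C : ℝ, 0 < C ∧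
      ∀ {X : Type*} [MeasurableSpace X] (μ : Measure X) (N : ℕ), 0 < N →
        ∀ (u s v : Fin N → X → ℝ) (g : X → ℝ) (B : ℝ), 0 < B →
          (∀ i, Measurable (u i)) → (∀ i, Measurable (s i)) →
          (∀ i, Measurable (v i)) → Measurable g →
          (∀ i x, 0 ≤ u i x) → (∀ i x, 0 ≤ s i x) →
          (∀ i x, 0 ≤ v i x) → (∀ x, 0 ≤ g x) →
          (∀ (i : Fin N) (lam ε : ℝ), 0 < lam → 0 < ε → ε < 1 / 2 →
            μ ({x | 2 * lam < u i x} ∩ {x | s i x ≤ ε * lam}) ≤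
              ENNReal.ofReal (C₀ * Real.exp (-c / ε ^ 2)) * μ {x | lam < v i x}) →
          (∀ i x, s i x ≤ A * g x) →
          (∀ i, ∫⁻ x, ENNReal.ofReal (v i x) ^ p ∂μ ≤ ENNReal.ofReal (B ^ p)) →
          (∫⁻ x, ENNReal.ofReal (g x) ^ p ∂μ ≤ ENNReal.ofReal (B ^ p)) →
          ∫⁻ x, ENNReal.ofReal (⨆ i, u i x) ^ p ∂μ ≤
            ENNReal.ofReal (C ^ p * Real.log (N + 1) ^ (p / 2) * B ^ p) := by
  have hlog2 : (0:ℝ) < Real.log 2 := Real.log_pos (by norm_num)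
  set D₀ : ℝ := max (4 / Real.sqrt (Real.log 2)) (Real.sqrt (2 / c)) with hD₀def
  have hD₀pos : 0 < D₀ := lt_max_of_lt_left (by positivity)
  set Cp : ℝ := 2 ^ p * C₀ * Real.log 2 ^ (-(p/2)) + (2 * A * D₀) ^ p with hCpdef
  have hCppos : 0 < Cp := by positivity
  refine ⟨Cp ^ (1/p), Real.rpow_pos_of_pos hCppos _, ?_⟩
  intro X mX μ N hN u s v g B hB hu hs hv hg hu0 hs0 hv0 hg0 hgood hsA hvB hgB
  have hCpp : (Cp ^ (1/p)) ^ p = Cp := by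
    rw [← Real.rpow_mul hCppos.le, one_div_mul_cancel hp.ne', Real.rpow_one]
  set L : ℝ := Real.log (N + 1) with hLdef
  have h2N : (2:ℝ) ≤ (N:ℝ) + 1 := by
    have : (1:ℝ) ≤ (N:ℝ) := by exact_mod_cast hN
    linarith
  have hL2 : Real.log 2 ≤ L := Real.log_le_log (by norm_num) h2N
  have hL : 0 < L := lt_of_lt_of_le hlog2 hL2
  set ε : ℝ := min (1/4) (Real.sqrt (c / (2*L))) with hεdef
  have hε0 : 0 < ε := lt_min (by norm_num) (Real.sqrt_pos.mpr (by positivity))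
  have hεlt : ε < 1/2 := (min_le_left _ _).trans_lt (by norm_num)
  -- exponential bound
  have hεc : 2*L ≤ c / ε^2 := by
    have h1 : ε ≤ Real.sqrt (c/(2*L)) := min_le_right _ _
    have h2 : ε^2 ≤ c/(2*L) := by
      nlinarith [Real.sq_sqrt (show (0:ℝ) ≤ c/(2*L) by positivity), hε0]
    rw [le_div_iff₀ (by positivity)]
    have h3 := (le_div_iff₀ (by positivity : (0:ℝ) < 2*L)).mp h2
    nlinarith
  have hexp : Real.exp (-c/ε^2) ≤ ((N:ℝ)+1)⁻¹ * ((N:ℝ)+1)⁻¹ := by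
    have he : Real.exp (-(2*L)) = ((N:ℝ)+1)⁻¹ * ((N:ℝ)+1)⁻¹ := by
      rw [show -(2*L) = -L + -L by ring, Real.exp_add, Real.exp_neg,
        Real.exp_log (by positivity : (0:ℝ) < (N:ℝ)+1)]
    calc Real.exp (-c/ε^2) ≤ Real.exp (-(2*L)) := by
          apply Real.exp_le_exp.mpr; rw [neg_div]; linarith
      _ = _ := he
  -- bound on 1/ε
  have hinvε : 1/ε ≤ D₀ * Real.sqrt L := by
    have hsqL : Real.sqrt (Real.log 2) ≤ Real.sqrt L := Real.sqrt_le_sqrt hL2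
    rcases min_cases (1/4 : ℝ) (Real.sqrt (c / (2*L))) with ⟨he, _⟩ | ⟨he, _⟩
    · have hε4 : (1:ℝ)/ε = 4 := by rw [hεdef, he]; norm_num
      rw [hε4, (div_mul_cancel₀ (4:ℝ) (show Real.sqrt (Real.log 2) ≠ 0 by positivity)).symm]
      exact mul_le_mul (le_max_left _ _) hsqL (Real.sqrt_nonneg _) hD₀pos.le
    · have hε' : 1/ε = Real.sqrt (2/c) * Real.sqrt L := by
        rw [hεdef, he, one_div, ← Real.sqrt_inv,
          show (c/(2*L))⁻¹ = 2/c * L by rw [inv_div]; ring,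
          Real.sqrt_mul (by positivity)]
      rw [hε']
      exact mul_le_mul_of_nonneg_right (le_max_right _ _) (Real.sqrt_nonneg _)
  -- setup
  haveI : Nonempty (Fin N) := ⟨⟨0, hN⟩⟩
  set U : X → ℝ := fun x => ⨆ i, u i x with hUdef
  have hUmeas : Measurable U := Measurable.iSup hu
  have hU0 : ∀ x, 0 ≤ U x := fun x =>
    (hu0 ⟨0, hN⟩ x).trans (le_ciSup (f := fun i => u i x) (Set.Finite.bddAbove (Set.finite_range _)) (⟨0, hN⟩ : Fin N))
  set K : ℝ≥0∞ := ENNReal.ofReal (C₀ * Real.exp (-c / ε ^ 2)) with hKdef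
  set D : ℝ := 2*A/ε with hDdef
  have hD : 0 < D := by positivity
  -- the tail bound
  have htail : ∀ t : ℝ, 0 < t →
      μ {x | t < U x} ≤ (∑ i : Fin N, K * μ {x | t < 2 * v i x}) + μ {x | t < D * g x} := by
    intro t ht
    have hsub : {x | t < U x} ⊆
        (⋃ i, {x | 2*(t/2) < u i x} ∩ {x | s i x ≤ ε*(t/2)}) ∪ {x | t < D * g x} := by
      intro x hx
      obtain ⟨i, hi⟩ := (lt_ciSup_iff (f := fun i => u i x)
        (Set.Finite.bddAbove (Set.finite_range _))).mp hx
      by_cases hsx : s i x ≤ ε * (t/2)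
      · exact Or.inl (mem_iUnion.mpr ⟨i, ⟨by simp only [mem_setOf_eq]; linarith, hsx⟩⟩)
      · push_neg at hsx
        refine Or.inr ?_
        have h1 := hsA i x
        have h2 : ε * (t/2) < A * g x := lt_of_lt_of_le hsx h1
        show t < D * g x
        rw [hDdef, show 2*A/ε*g x = (2*(A*g x))/ε by ring, lt_div_iff₀ hε0]
        nlinarith
    calc μ {x | t < U x} ≤ μ ((⋃ i, {x | 2*(t/2) < u i x} ∩ {x | s i x ≤ ε*(t/2)})
          ∪ {x | t < D * g x}) := measure_mono hsub
      _ ≤ μ (⋃ i, {x | 2*(t/2) < u i x} ∩ {x | s i x ≤ ε*(t/2)}) + μ {x | t < D * g x} :=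
          measure_union_le _ _
      _ ≤ (∑ i : Fin N, μ ({x | 2*(t/2) < u i x} ∩ {x | s i x ≤ ε*(t/2)})) + μ {x | t < D * g x} := by
          gcongr
          exact (measure_iUnion_le _).trans (le_of_eq (tsum_fintype _))
      _ ≤ (∑ i : Fin N, K * μ {x | t < 2 * v i x}) + μ {x | t < D * g x} := by
          gcongr with i
          have := hgood i (t/2) ε (by positivity) hε0 hεlt
          have hset : {x | t/2 < v i x} = {x | t < 2 * v i x} := by
            ext x; constructor <;> intro h <;> simp only [mem_setOf_eq] at * <;> linarith
          rw [hset] at this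
          exact this
  -- layer cake for U
  have hNN : ∀ x, (0:ℝ) ≤ U x := hU0
  have layU : ∫⁻ x, ENNReal.ofReal (U x) ^ p ∂μ
      = ENNReal.ofReal p * ∫⁻ t in Ioi (0:ℝ), μ {x | t < U x} * ENNReal.ofReal (t ^ (p-1)) := by
    rw [← lintegral_rpow_eq_lintegral_meas_lt_mul μ (ae_of_all _ hU0) hUmeas.aemeasurable hp]
    exact lintegral_congr fun x => ENNReal.ofReal_rpow_of_nonneg (hU0 x) hp.le
  -- layer cake for the majorants
  have layV : ∀ i : Fin N,
      ENNReal.ofReal p * ∫⁻ t in Ioi (0:ℝ), μ {x | t < 2 * v i x} * ENNReal.ofReal (t ^ (p-1))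
        = ∫⁻ x, ENNReal.ofReal ((2 * v i x) ^ p) ∂μ := fun i =>
    (lintegral_rpow_eq_lintegral_meas_lt_mul μ
      (ae_of_all _ fun x => by have := hv0 i x; exact mul_nonneg (by norm_num) this)
      ((measurable_const.mul (hv i)).aemeasurable) hp).symm
  have layG : ENNReal.ofReal p * ∫⁻ t in Ioi (0:ℝ), μ {x | t < D * g x} * ENNReal.ofReal (t ^ (p-1))
      = ∫⁻ x, ENNReal.ofReal ((D * g x) ^ p) ∂μ :=
    (lintegral_rpow_eq_lintegral_meas_lt_mul μ
      (ae_of_all _ fun x => by have := hg0 x; exact mul_nonneg hD.le this)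
      ((measurable_const.mul hg).aemeasurable) hp).symm
  -- Lp bounds for majorants
  have hVbd : ∀ i : Fin N, ∫⁻ x, ENNReal.ofReal ((2 * v i x) ^ p) ∂μ
      ≤ ENNReal.ofReal ((2:ℝ) ^ p) * ENNReal.ofReal (B ^ p) := by
    intro i
    have : ∀ x, ENNReal.ofReal ((2 * v i x) ^ p)
        = ENNReal.ofReal ((2:ℝ) ^ p) * ENNReal.ofReal (v i x ^ p) := by
      intro x
      rw [Real.mul_rpow (by norm_num) (hv0 i x), ENNReal.ofReal_mul (by positivity)]
    simp_rw [this]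
    rw [lintegral_const_mul' _ _ ENNReal.ofReal_ne_top]
    refine mul_le_mul_right ?_ _
    calc ∫⁻ x, ENNReal.ofReal (v i x ^ p) ∂μ
        = ∫⁻ x, ENNReal.ofReal (v i x) ^ p ∂μ :=
          lintegral_congr fun x => (ENNReal.ofReal_rpow_of_nonneg (hv0 i x) hp.le).symm
      _ ≤ ENNReal.ofReal (B ^ p) := hvB i
  have hGbd : ∫⁻ x, ENNReal.ofReal ((D * g x) ^ p) ∂μ
      ≤ ENNReal.ofReal (D ^ p) * ENNReal.ofReal (B ^ p) := by
    have : ∀ x, ENNReal.ofReal ((D * g x) ^ p)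
        = ENNReal.ofReal (D ^ p) * ENNReal.ofReal (g x ^ p) := by
      intro x
      rw [Real.mul_rpow hD.le (hg0 x), ENNReal.ofReal_mul (by positivity)]
    simp_rw [this]
    rw [lintegral_const_mul' _ _ ENNReal.ofReal_ne_top]
    refine mul_le_mul_right ?_ _
    calc ∫⁻ x, ENNReal.ofReal (g x ^ p) ∂μ
        = ∫⁻ x, ENNReal.ofReal (g x) ^ p ∂μ :=
          lintegral_congr fun x => (ENNReal.ofReal_rpow_of_nonneg (hg0 x) hp.le).symm
      _ ≤ ENNReal.ofReal (B ^ p) := hgB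
  -- measurability of tail functions
  have hmeasV : ∀ i : Fin N, Measurable (fun t : ℝ => μ {x | t < 2 * v i x}) := by
    intro i
    exact Antitone.measurable fun t₁ t₂ h12 =>
      measure_mono (fun x hx => lt_of_le_of_lt h12 hx)
  have hmeasG : Measurable (fun t : ℝ => μ {x | t < D * g x}) :=
    Antitone.measurable fun t₁ t₂ h12 => measure_mono (fun x hx => lt_of_le_of_lt h12 hx)
  -- main estimate
  have main : ∫⁻ x, ENNReal.ofReal (U x) ^ p ∂μ
      ≤ (∑ i : Fin N, K * ∫⁻ x, ENNReal.ofReal ((2 * v i x) ^ p) ∂μ)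
        + ∫⁻ x, ENNReal.ofReal ((D * g x) ^ p) ∂μ := by
    rw [layU]
    have step1 : ∫⁻ t in Ioi (0:ℝ), μ {x | t < U x} * ENNReal.ofReal (t ^ (p-1))
        ≤ ∫⁻ t in Ioi (0:ℝ),
            ((∑ i : Fin N, K * μ {x | t < 2 * v i x}) + μ {x | t < D * g x})
              * ENNReal.ofReal (t ^ (p-1)) := by
      apply lintegral_mono_ae
      filter_upwards [self_mem_ae_restrict (measurableSet_Ioi : MeasurableSet (Ioi (0:ℝ)))]
        with t ht
      exact mul_le_mul_left (htail t ht) _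
    have step2 : ∫⁻ t in Ioi (0:ℝ),
          ((∑ i : Fin N, K * μ {x | t < 2 * v i x}) + μ {x | t < D * g x})
            * ENNReal.ofReal (t ^ (p-1))
        = (∑ i : Fin N, K * ∫⁻ t in Ioi (0:ℝ), μ {x | t < 2 * v i x} * ENNReal.ofReal (t ^ (p-1)))
          + ∫⁻ t in Ioi (0:ℝ), μ {x | t < D * g x} * ENNReal.ofReal (t ^ (p-1)) := by
      simp_rw [add_mul, Finset.sum_mul, mul_assoc]
      rw [lintegral_add_left]
      · congr 1
        rw [lintegral_finset_sum]
        · exact Finset.sum_congr rfl fun i _ =>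
            lintegral_const_mul' _ _ ENNReal.ofReal_ne_top
        · exact fun i _ => (measurable_const.mul
            ((hmeasV i).mul (measurable_id.ennreal_ofReal.comp (by fun_prop))))
      · exact Finset.measurable_sum _ fun i _ => measurable_const.mul
          ((hmeasV i).mul (measurable_id.ennreal_ofReal.comp (by fun_prop)))
    calc ENNReal.ofReal p * ∫⁻ t in Ioi (0:ℝ), μ {x | t < U x} * ENNReal.ofReal (t ^ (p-1))
        ≤ ENNReal.ofReal p * _ := mul_le_mul_right step1 _
      _ = (∑ i : Fin N, K * (ENNReal.ofReal p *
              ∫⁻ t in Ioi (0:ℝ), μ {x | t < 2 * v i x} * ENNReal.ofReal (t ^ (p-1))))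
          + ENNReal.ofReal p *
              ∫⁻ t in Ioi (0:ℝ), μ {x | t < D * g x} * ENNReal.ofReal (t ^ (p-1)) := by
          rw [step2, mul_add, Finset.mul_sum]
          congr 1
          exact Finset.sum_congr rfl fun i _ => by ring
      _ = _ := by
          rw [layG]
          congr 1
          exact Finset.sum_congr rfl fun i _ => by rw [layV i]
  -- put everything together
  have bound : ∫⁻ x, ENNReal.ofReal (U x) ^ p ∂μ
      ≤ (N : ℝ≥0∞) * (K * (ENNReal.ofReal ((2:ℝ) ^ p) * ENNReal.ofReal (B ^ p)))
        + ENNReal.ofReal (D ^ p) * ENNReal.ofReal (B ^ p) := by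
    refine main.trans (add_le_add ?_ hGbd)
    calc (∑ i : Fin N, K * ∫⁻ x, ENNReal.ofReal ((2 * v i x) ^ p) ∂μ)
        ≤ ∑ i : Fin N, K * (ENNReal.ofReal ((2:ℝ) ^ p) * ENNReal.ofReal (B ^ p)) := by
          gcongr with i
          exact hVbd i
      _ = (N : ℝ≥0∞) * (K * (ENNReal.ofReal ((2:ℝ) ^ p) * ENNReal.ofReal (B ^ p))) := by
          rw [Finset.sum_const, Finset.card_univ, Fintype.card_fin, nsmul_eq_mul]
  -- final numeric bound
  have final : (N : ℝ≥0∞) * (K * (ENNReal.ofReal ((2:ℝ) ^ p) * ENNReal.ofReal (B ^ p)))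
        + ENNReal.ofReal (D ^ p) * ENNReal.ofReal (B ^ p)
      ≤ ENNReal.ofReal ((Cp ^ (1/p)) ^ p * L ^ (p / 2) * B ^ p) := by
    rw [hCpp]
    have he0 : 0 ≤ Real.exp (-c / ε ^ 2) := (Real.exp_pos _).le
    rw [hKdef, ← ENNReal.ofReal_natCast, ← ENNReal.ofReal_mul (by positivity),
      ← ENNReal.ofReal_mul (by positivity), ← ENNReal.ofReal_mul (by positivity),
      ← ENNReal.ofReal_mul (by positivity), ← ENNReal.ofReal_add (by positivity) (by positivity)]
    apply ENNReal.ofReal_le_ofReal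
    -- real inequality
    have hNe : (N:ℝ) * (C₀ * Real.exp (-c / ε ^ 2)) ≤ C₀ := by
      have h1 : (N:ℝ) * Real.exp (-c / ε ^ 2) ≤ 1 := by
        have h2 : Real.exp (-c / ε ^ 2) ≤ ((N:ℝ)+1)⁻¹ * ((N:ℝ)+1)⁻¹ := hexp
        have h3 : (0:ℝ) < (N:ℝ)+1 := by positivity
        have h4 : (N:ℝ) * (((N:ℝ)+1)⁻¹ * ((N:ℝ)+1)⁻¹) ≤ 1 := by
          rw [← mul_inv, ← div_eq_mul_inv, div_le_one (by positivity)]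
          nlinarith
        nlinarith [Nat.cast_nonneg (α := ℝ) N, Real.exp_pos (-c / ε ^ 2)]
      nlinarith [Real.exp_pos (-c / ε ^ 2), Nat.cast_nonneg (α := ℝ) N]
    have hterm1 : C₀ * (2:ℝ) ^ p ≤ 2 ^ p * C₀ * Real.log 2 ^ (-(p/2)) * L ^ (p / 2) := by
      have h5 : (1:ℝ) ≤ Real.log 2 ^ (-(p/2)) * L ^ (p / 2) := by
        have : Real.log 2 ^ (-(p/2)) * L ^ (p / 2) = (L / Real.log 2) ^ (p/2) := by
          rw [Real.div_rpow hL.le hlog2.le, Real.rpow_neg hlog2.le, div_eq_mul_inv, mul_comm, div_eq_mul_inv]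
        rw [this]
        exact Real.one_le_rpow (by rw [le_div_iff₀ hlog2]; linarith) (by positivity)
      calc C₀ * (2:ℝ) ^ p = 2 ^ p * C₀ * 1 := by ring
        _ ≤ 2 ^ p * C₀ * (Real.log 2 ^ (-(p/2)) * L ^ (p / 2)) := by
            apply mul_le_mul_of_nonneg_left h5 (by positivity)
        _ = 2 ^ p * C₀ * Real.log 2 ^ (-(p/2)) * L ^ (p / 2) := by ring
    have hterm2 : D ^ p ≤ (2 * A * D₀) ^ p * L ^ (p / 2) := by
      have hDle : D ≤ 2 * A * D₀ * Real.sqrt L := by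
        rw [hDdef, div_eq_mul_inv, ← one_div]
        calc 2 * A * (1/ε) ≤ 2 * A * (D₀ * Real.sqrt L) :=
              mul_le_mul_of_nonneg_left hinvε (by positivity)
          _ = 2 * A * D₀ * Real.sqrt L := by ring
      calc D ^ p ≤ (2 * A * D₀ * Real.sqrt L) ^ p :=
            Real.rpow_le_rpow hD.le hDle hp.le
        _ = (2 * A * D₀) ^ p * Real.sqrt L ^ p := by
            rw [Real.mul_rpow (by positivity) (Real.sqrt_nonneg _)]
        _ = (2 * A * D₀) ^ p * L ^ (p / 2) := by
            rw [Real.sqrt_eq_rpow, ← Real.rpow_mul hL.le,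
              show 1/(2:ℝ)*p = p/2 by ring]
      -- note: fix sqrt L ^ p
    have hBp : (0:ℝ) < B ^ p := Real.rpow_pos_of_pos hB _
    calc (N:ℝ) * (C₀ * Real.exp (-c / ε ^ 2) * ((2:ℝ) ^ p * B ^ p)) + D ^ p * B ^ p
        ≤ C₀ * (2 ^ p * B ^ p) + (2 * A * D₀) ^ p * L ^ (p / 2) * B ^ p := by
          refine add_le_add ?_ (mul_le_mul_of_nonneg_right hterm2 hBp.le)
          have h2p : (0:ℝ) < (2:ℝ)^p * B ^ p := by positivity
          calc (N:ℝ) * (C₀ * Real.exp (-c / ε ^ 2) * ((2:ℝ) ^ p * B ^ p))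
              = ((N:ℝ) * (C₀ * Real.exp (-c / ε ^ 2))) * ((2:ℝ) ^ p * B ^ p) := by ring
            _ ≤ C₀ * ((2:ℝ) ^ p * B ^ p) := mul_le_mul_of_nonneg_right hNe h2p.le
            _ = C₀ * (2 ^ p * B ^ p) := rfl
      _ ≤ (2 ^ p * C₀ * Real.log 2 ^ (-(p/2)) + (2 * A * D₀) ^ p) * L ^ (p / 2) * B ^ p := by
          have := mul_le_mul_of_nonneg_right hterm1 hBp.le
          nlinarith [this]
  exact bound.trans final
end
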